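/- Let a, b₁₁, b₂₀ ∈ ℝ with b₁₁ ≠ 0. On the region {(x,y) ∈ ℝ² : 1 + b₁₁·y > 0}, the function Ψ(x,y) = (1/3)·( [3b₁₁·y·(2(a + b₁₁) − a·b₁₁·y) − 6(a + b₁₁)·log(b₁₁·y + 1)]/b₁₁³ + x²·(2b₂₀·x + 3) ) is a first integral of the system ẋ = -y + a·y², ẏ = x + b₂₀x² + b₁₁xy + b₁₁b₂₀x²y; that is, ∂Ψ/∂x · (-y + a·y²) + ∂Ψ/∂y · (x + b₂₀x² + b₁₁xy + b₁₁b₂₀x²y) = 0 on that region. -/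

import Mathlib

/-- The Darboux first integral `Ψ` of the system
`ẋ = -y + a y², ẏ = x + b₂₀ x² + b₁₁ x y + b₁₁ b₂₀ x² y` on `{1 + b₁₁ y > 0}`. -/
theorem stmt_3 (a b11 b20 : ℝ) (hb : b11 ≠ 0) :
    ∀ x y : ℝ, 1 + b11 * y > 0 →
      deriv (fun x' : ℝ => (1 / 3) *
          ((3 * b11 * y * (2 * (a + b11) - a * b11 * y)
            - 6 * (a + b11) * Real.log (b11 * y + 1)) / b11 ^ 3
          + x' ^ 2 * (2 * b20 * x' + 3))) x * (-y + a * y ^ 2)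
      + deriv (fun y' : ℝ => (1 / 3) *
          ((3 * b11 * y' * (2 * (a + b11) - a * b11 * y')
            - 6 * (a + b11) * Real.log (b11 * y' + 1)) / b11 ^ 3
          + x ^ 2 * (2 * b20 * x + 3))) y
          * (x + b20 * x ^ 2 + b11 * x * y + b11 * b20 * x ^ 2 * y) = 0 := by
  intro x y hy
  have hne : b11 * y + 1 ≠ 0 := by linarith
  -- derivative in x
  have hx : HasDerivAt (fun x' : ℝ => (1 / 3) *
      ((3 * b11 * y * (2 * (a + b11) - a * b11 * y)
        - 6 * (a + b11) * Real.log (b11 * y + 1)) / b11 ^ 3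
      + x' ^ 2 * (2 * b20 * x' + 3))) (2 * b20 * x ^ 2 + 2 * x) x := by
    have h3 := (hasDerivAt_pow 3 x).const_mul (2 * b20 / 3)
    have h2 := (hasDerivAt_pow 2 x)
    have h := ((h3.add h2).add_const
      ((3 * b11 * y * (2 * (a + b11) - a * b11 * y)
        - 6 * (a + b11) * Real.log (b11 * y + 1)) / b11 ^ 3 / 3))
    convert h using 1
    · rfl
    · rfl
    · funext x'; simp only [Pi.add_apply]; push_cast; ring
    · push_cast; ring
  -- derivative in y
  have hylog : HasDerivAt (fun y' : ℝ => Real.log (b11 * y' + 1))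
      (b11 / (b11 * y + 1)) y := by
    have hin : HasDerivAt (fun y' : ℝ => b11 * y' + 1) b11 y := by
      simpa using ((hasDerivAt_id y).const_mul b11).add_const 1
    exact ((Real.hasDerivAt_log hne).comp y hin).congr_deriv (by ring : (b11 * y + 1)⁻¹ * b11 = b11 / (b11 * y + 1))
  have hypoly : HasDerivAt (fun y' : ℝ => 3 * b11 * y' * (2 * (a + b11) - a * b11 * y'))
      (6 * b11 * (a + b11) - 6 * a * b11 ^ 2 * y) y := by
    have h1 := ((hasDerivAt_pow 2 y).const_mul (-(3 * a * b11 ^ 2)))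
    have h2 := ((hasDerivAt_id y).const_mul (6 * b11 * (a + b11)))
    have h := h1.add h2
    convert h using 1
    · rfl
    · rfl
    · funext y'; simp only [id_eq, Pi.add_apply]; push_cast; ring
    · push_cast; ring
  have hyd : HasDerivAt (fun y' : ℝ => (1 / 3) *
      ((3 * b11 * y' * (2 * (a + b11) - a * b11 * y')
        - 6 * (a + b11) * Real.log (b11 * y' + 1)) / b11 ^ 3
      + x ^ 2 * (2 * b20 * x + 3)))
      ((1 / 3) * (((6 * b11 * (a + b11) - 6 * a * b11 ^ 2 * y)
        - 6 * (a + b11) * (b11 / (b11 * y + 1))) / b11 ^ 3)) y := by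
    have h := (((hypoly.sub (hylog.const_mul (6 * (a + b11)))).div_const (b11 ^ 3)).add_const
      (x ^ 2 * (2 * b20 * x + 3))).const_mul (1 / 3)
    convert h using 1
    all_goals rfl
  rw [hx.deriv, hyd.deriv]
  field_simp [show y * b11 + 1 ≠ 0 by linarith]
  ring
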